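/- For fixed ξ₁ < ξ₂ and σ > 0, the truncated-Gaussian mean function f(z) = z + σ·(φ((ξ₁−z)/σ) − φ((ξ₂−z)/σ))/(Φ((ξ₂−z)/σ) − Φ((ξ₁−z)/σ)) satisfies lim_{z→−∞} f(z) = ξ₁ and lim_{z→+∞} f(z) = ξ₂. -/

import Mathlib

open Real MeasureTheory Filter

noncomputable def stdPhi (z : ℝ) : ℝ := (Real.sqrt (2 * Real.pi))⁻¹ * Real.exp (-z ^ 2 / 2)

noncomputable def stdCDF (z : ℝ) : ℝ := ∫ t in Set.Iic z, stdPhi t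

lemma stdPhi_pos (t : ℝ) : 0 < stdPhi t := by unfold stdPhi; positivity

@[fun_prop] lemma stdPhi_cont : Continuous stdPhi := by unfold stdPhi; fun_prop

lemma stdPhi_neg (x : ℝ) : stdPhi (-x) = stdPhi x := by unfold stdPhi; rw [neg_sq]

lemma stdPhi_integrable : Integrable stdPhi := by
  have h : stdPhi = fun x => (Real.sqrt (2 * Real.pi))⁻¹ * Real.exp (-(1/2) * x ^ 2) := by
    funext x; unfold stdPhi; ring_nf
  rw [h]
  exact (integrable_exp_neg_mul_sq (by norm_num)).const_mul _

lemma stdCDF_sub (a b : ℝ) : stdCDF b - stdCDF a = ∫ t in a..b, stdPhi t :=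
  intervalIntegral.integral_Iic_sub_Iic stdPhi_integrable.integrableOn
    stdPhi_integrable.integrableOn

lemma hasDeriv_negPhi (t : ℝ) : HasDerivAt (fun u => -stdPhi u) (t * stdPhi t) t := by
  have h1 : HasDerivAt (fun u : ℝ => -u ^ 2 / 2) (-t) t := by
    have := (hasDerivAt_pow 2 t).neg.div_const 2
    simpa using this.congr_deriv (by ring)
  have h2 := (h1.exp.const_mul (Real.sqrt (2 * Real.pi))⁻¹).neg
  unfold stdPhi
  exact h2.congr_deriv (by ring)

lemma integral_mul_phi (a b : ℝ) : ∫ t in a..b, t * stdPhi t = stdPhi a - stdPhi b := by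
  have := intervalIntegral.integral_eq_sub_of_hasDerivAt
    (f := fun u => -stdPhi u) (f' := fun t => t * stdPhi t) (a := a) (b := b)
    (fun t _ => hasDeriv_negPhi t)
    ((continuous_id.mul stdPhi_cont).intervalIntegrable a b)
  rw [this]; ring

lemma denom_pos {a b : ℝ} (hab : a < b) : 0 < ∫ t in a..b, stdPhi t :=
  intervalIntegral.intervalIntegral_pos_of_pos (stdPhi_cont.intervalIntegrable a b)
    stdPhi_pos hab

lemma int_s_exp {α : ℝ} (c : ℝ) (hα : 0 < α) (hc : 0 ≤ c) :
    ∫ s in (0:ℝ)..c, s * Real.exp (-(α*s)) ≤ 1 / α ^ 2 := by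
  have hF : ∀ s ∈ Set.uIcc (0:ℝ) c, HasDerivAt (fun s => -((s*α + 1) / α ^ 2) * Real.exp (-(α*s)))
      (s * Real.exp (-(α*s))) s := by
    intro s _
    have h1 : HasDerivAt (fun s : ℝ => -((s*α + 1) / α ^ 2)) (-(α / α^2)) s := by
      have := ((hasDerivAt_id s).mul_const α).add_const 1
      exact ((this.div_const (α^2)).neg).congr_deriv (by ring)
    have h2 : HasDerivAt (fun s : ℝ => Real.exp (-(α*s))) (-α * Real.exp (-(α*s))) s := by
      have h : HasDerivAt (fun s : ℝ => -(α*s)) (-α) s := by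
        exact ((hasDerivAt_id s).const_mul α).neg.congr_deriv (by ring)
      simpa [mul_comm] using h.exp
    have := h1.mul h2
    refine this.congr_deriv ?_
    field_simp
    ring
  have hint : IntervalIntegrable (fun s => s * Real.exp (-(α*s))) volume 0 c := by
    apply Continuous.intervalIntegrable; fun_prop
  rw [intervalIntegral.integral_eq_sub_of_hasDerivAt hF hint]
  have h0 : (0:ℝ) ≤ ((c*α + 1) / α ^ 2) * Real.exp (-(α*c)) := by positivity
  have h1 : -((c*α + 1) / α ^ 2) * Real.exp (-(α*c)) ≤ 0 := by
    rw [neg_mul]; exact neg_nonpos.mpr h0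
  simp only [mul_zero, neg_zero, Real.exp_zero]
  have : -((0 * α + 1) / α ^ 2) * 1 = -(1 / α ^ 2) := by ring
  rw [this]
  linarith

noncomputable def ratioAux (c α : ℝ) : ℝ :=
  (∫ t in α..(α+c), (t-α) * stdPhi t) / (∫ t in α..(α+c), stdPhi t)

lemma ratio_bound (c : ℝ) (hc : 0 < c) {α : ℝ} (hα1 : 1 ≤ α) (hα2 : c⁻¹ ≤ α) :
    ratioAux c α ≤ Real.exp (1 + c^2/2) / α := by
  have hαpos : (0:ℝ) < α := lt_of_lt_of_le one_pos hα1
  have hinvc : α⁻¹ ≤ c := by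
    rw [← inv_inv c]
    exact inv_anti₀ (inv_pos.mpr hc) hα2
  set K := (Real.sqrt (2 * Real.pi))⁻¹ with hK
  have hKpos : 0 < K := by
    rw [hK]; positivity
  set E := Real.exp (-α^2/2) with hE
  have hEpos : 0 < E := Real.exp_pos _
  have hN : (∫ t in α..(α+c), (t-α) * stdPhi t) = ∫ s in (0:ℝ)..c, s * stdPhi (α+s) := by
    have := intervalIntegral.integral_comp_add_left (a := (0:ℝ)) (b := c)
      (fun t => (t-α) * stdPhi t) α
    simp only [add_zero] at this
    rw [← this]
    congr 1
    funext s
    ring_nf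
  have hD : (∫ t in α..(α+c), stdPhi t) = ∫ s in (0:ℝ)..c, stdPhi (α+s) := by
    have := intervalIntegral.integral_comp_add_left (a := (0:ℝ)) (b := c) stdPhi α
    simp only [add_zero] at this
    rw [← this]
  have hNb : (∫ s in (0:ℝ)..c, s * stdPhi (α+s)) ≤ K * E * (1/α^2) := by
    have hmono : (∫ s in (0:ℝ)..c, s * stdPhi (α+s))
        ≤ ∫ s in (0:ℝ)..c, K * E * (s * Real.exp (-(α*s))) := by
      apply intervalIntegral.integral_mono_on hc.le
      · exact (Continuous.intervalIntegrable (by fun_prop) _ _)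
      · exact (Continuous.intervalIntegrable (by fun_prop) _ _)
      · intro s hs
        obtain ⟨hs0, _⟩ := hs
        have key : Real.exp (-(α+s)^2/2) ≤ E * Real.exp (-(α*s)) := by
          rw [hE, ← Real.exp_add]
          apply Real.exp_le_exp.mpr
          nlinarith [sq_nonneg s]
        unfold stdPhi
        rw [← hK]
        calc s * (K * Real.exp (-(α+s)^2/2)) ≤ s * (K * (E * Real.exp (-(α*s)))) := by
              apply mul_le_mul_of_nonneg_left _ hs0
              exact mul_le_mul_of_nonneg_left key hKpos.le
          _ = K * E * (s * Real.exp (-(α*s))) := by ring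
    rw [intervalIntegral.integral_const_mul] at hmono
    calc (∫ s in (0:ℝ)..c, s * stdPhi (α+s)) ≤ K * E * ∫ s in (0:ℝ)..c, s * Real.exp (-(α*s)) :=
        hmono
      _ ≤ K * E * (1/α^2) := by
        apply mul_le_mul_of_nonneg_left (int_s_exp c hαpos hc.le)
        positivity
  have hDb : α⁻¹ * (K * E * Real.exp (-(1+c^2/2))) ≤ ∫ s in (0:ℝ)..c, stdPhi (α+s) := by
    have h1 : (∫ s in (0:ℝ)..α⁻¹, stdPhi (α+s)) ≤ ∫ s in (0:ℝ)..c, stdPhi (α+s) := by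
      apply intervalIntegral.integral_mono_interval le_rfl (by positivity) hinvc
      · exact Filter.Eventually.of_forall fun x => (stdPhi_pos _).le
      · exact (Continuous.intervalIntegrable (by fun_prop) _ _)
    have h2 : α⁻¹ * (K * E * Real.exp (-(1+c^2/2))) ≤ ∫ s in (0:ℝ)..α⁻¹, stdPhi (α+s) := by
      have hmono : (∫ s in (0:ℝ)..α⁻¹, K * E * Real.exp (-(1+c^2/2)))
          ≤ ∫ s in (0:ℝ)..α⁻¹, stdPhi (α+s) := by
        apply intervalIntegral.integral_mono_on (by positivity)
        · exact intervalIntegrable_const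
        · exact (Continuous.intervalIntegrable (by fun_prop) _ _)
        · intro s hs
          obtain ⟨hs0, hs1⟩ := hs
          have hαs : α * s ≤ 1 := by
            calc α * s ≤ α * α⁻¹ := mul_le_mul_of_nonneg_left hs1 hαpos.le
              _ = 1 := mul_inv_cancel₀ hαpos.ne'
          have hsc : s ≤ c := le_trans hs1 hinvc
          have key : E * Real.exp (-(1+c^2/2)) ≤ Real.exp (-(α+s)^2/2) := by
            rw [hE, ← Real.exp_add]
            apply Real.exp_le_exp.mpr
            nlinarith [sq_nonneg s, sq_nonneg c]
          unfold stdPhi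
          rw [← hK]
          calc K * E * Real.exp (-(1+c^2/2)) = K * (E * Real.exp (-(1+c^2/2))) := by ring
            _ ≤ K * Real.exp (-(α+s)^2/2) := mul_le_mul_of_nonneg_left key hKpos.le
      rwa [intervalIntegral.integral_const, smul_eq_mul, sub_zero] at hmono
    linarith
  unfold ratioAux
  rw [hN, hD]
  have hDpos : (0:ℝ) < α⁻¹ * (K * E * Real.exp (-(1+c^2/2))) := by positivity
  calc (∫ s in (0:ℝ)..c, s * stdPhi (α+s)) / (∫ s in (0:ℝ)..c, stdPhi (α+s))
      ≤ (K * E * (1/α^2)) / (α⁻¹ * (K * E * Real.exp (-(1+c^2/2)))) := by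
        apply div_le_div₀ (by positivity) hNb hDpos hDb
    _ = Real.exp (1 + c^2/2) / α := by
        rw [Real.exp_neg]
        field_simp

lemma ratio_nonneg (c : ℝ) (hc : 0 < c) (α : ℝ) : 0 ≤ ratioAux c α := by
  unfold ratioAux
  apply div_nonneg _ (denom_pos (by linarith : α < α + c)).le
  apply intervalIntegral.integral_nonneg (by linarith : α ≤ α + c)
  intro t ht
  exact mul_nonneg (by linarith [ht.1]) (stdPhi_pos t).le

lemma ratio_tendsto (c : ℝ) (hc : 0 < c) :
    Tendsto (ratioAux c) atTop (nhds 0) := by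
  apply tendsto_of_tendsto_of_tendsto_of_le_of_le' (tendsto_const_nhds (α := ℝ))
    (tendsto_const_nhds.div_atTop tendsto_id)
  · exact Filter.Eventually.of_forall (ratio_nonneg c hc)
  · filter_upwards [eventually_ge_atTop (1:ℝ), eventually_ge_atTop c⁻¹] with α h1 h2
    exact ratio_bound c hc h1 h2

theorem truncated_gaussian_mean_limits (ξ₁ ξ₂ σ : ℝ) (hξ : ξ₁ < ξ₂) (hσ : 0 < σ) :
    Tendsto (fun z : ℝ =>
      z + σ * (stdPhi ((ξ₁ - z) / σ) - stdPhi ((ξ₂ - z) / σ)) /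
        (stdCDF ((ξ₂ - z) / σ) - stdCDF ((ξ₁ - z) / σ))) atBot (nhds ξ₁) ∧
    Tendsto (fun z : ℝ =>
      z + σ * (stdPhi ((ξ₁ - z) / σ) - stdPhi ((ξ₂ - z) / σ)) /
        (stdCDF ((ξ₂ - z) / σ) - stdCDF ((ξ₁ - z) / σ))) atTop (nhds ξ₂) := by
  set c := (ξ₂ - ξ₁) / σ with hcdef
  have hc : 0 < c := div_pos (by linarith) hσ
  -- key identities
  have key : ∀ z : ℝ,
      z + σ * (stdPhi ((ξ₁ - z) / σ) - stdPhi ((ξ₂ - z) / σ)) /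
        (stdCDF ((ξ₂ - z) / σ) - stdCDF ((ξ₁ - z) / σ))
      = ξ₁ + σ * ratioAux c ((ξ₁ - z) / σ) ∧
      z + σ * (stdPhi ((ξ₁ - z) / σ) - stdPhi ((ξ₂ - z) / σ)) /
        (stdCDF ((ξ₂ - z) / σ) - stdCDF ((ξ₁ - z) / σ))
      = ξ₂ - σ * ratioAux c ((z - ξ₂) / σ) := by
    intro z
    set a := (ξ₁ - z) / σ with ha
    set b := (ξ₂ - z) / σ with hb
    have hab : a < b := by
      rw [ha, hb, div_lt_div_iff_of_pos_right hσ]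
      linarith
    have habc : b = a + c := by rw [ha, hb, hcdef]; field_simp; ring
    set D := ∫ t in a..b, stdPhi t with hDdef
    set X := ∫ t in a..b, t * stdPhi t with hXdef
    have hD := stdCDF_sub a b
    have hX : stdPhi a - stdPhi b = X := (integral_mul_phi a b).symm
    have hDpos : 0 < D := denom_pos hab
    have hsplit1 : ∫ t in a..b, (t - a) * stdPhi t = X - a * D := by
      have hfe : (fun t => (t - a) * stdPhi t) = fun t => t * stdPhi t - a * stdPhi t := by
        funext t; ring
      rw [hfe, intervalIntegral.integral_sub (Continuous.intervalIntegrable (by fun_prop) _ _)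
        (Continuous.intervalIntegrable (by fun_prop) _ _),
        intervalIntegral.integral_const_mul]
    have hsplit2 : ∫ t in a..b, (b - t) * stdPhi t = b * D - X := by
      have hfe : (fun t => (b - t) * stdPhi t) = fun t => b * stdPhi t - t * stdPhi t := by
        funext t; ring
      rw [hfe, intervalIntegral.integral_sub (Continuous.intervalIntegrable (by fun_prop) _ _)
        (Continuous.intervalIntegrable (by fun_prop) _ _),
        intervalIntegral.integral_const_mul]
    have hr1 : ratioAux c a = (X - a * D) / D := by
      unfold ratioAux
      rw [← habc, hsplit1]
    have hr2 : ratioAux c (-b) = (b * D - X) / D := by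
      unfold ratioAux
      have h1 : -b + c = -a := by rw [habc]; ring
      rw [h1]
      have e1 : (∫ t in -b..(-a), (t - -b) * stdPhi t) = ∫ t in a..b, (b - t) * stdPhi t := by
        rw [← intervalIntegral.integral_comp_neg (fun t => (t - -b) * stdPhi t)]
        congr 1; funext x; rw [stdPhi_neg]; ring
      have e2 : (∫ t in -b..(-a), stdPhi t) = D := by
        rw [← intervalIntegral.integral_comp_neg stdPhi, hDdef]
        congr 1; funext x; rw [stdPhi_neg]
      rw [e1, e2, hsplit2]
    have hβ : (z - ξ₂) / σ = -b := by rw [hb]; ring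
    constructor
    · have hσa : σ * a = ξ₁ - z := by rw [ha]; field_simp
      rw [hD, ← hDdef, hX, hr1]
      have h3 : (X - a * D) / D = X / D - a := by field_simp
      rw [h3, mul_sub, hσa, mul_div_assoc]
      ring
    · have hσb : σ * b = ξ₂ - z := by rw [hb]; field_simp
      rw [hD, ← hDdef, hX, hβ, hr2]
      have h3 : (b * D - X) / D = b - X / D := by field_simp
      rw [h3, mul_sub, hσb, mul_div_assoc]
      ring
  constructor
  · have hcomp : Tendsto (fun z : ℝ => (ξ₁ - z) / σ) atBot atTop := by
      apply Tendsto.atTop_div_const hσ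
      have h := tendsto_atTop_add_const_left atBot ξ₁ tendsto_neg_atBot_atTop
      refine h.congr fun z => ?_
      ring
    have h0 : Tendsto (fun z : ℝ => ξ₁ + σ * ratioAux c ((ξ₁ - z) / σ)) atBot (nhds ξ₁) := by
      have := (tendsto_const_nhds : Tendsto (fun _ : ℝ => ξ₁) atBot (nhds ξ₁)).add (((ratio_tendsto c hc).comp hcomp).const_mul σ)
      simpa using this
    exact h0.congr fun z => ((key z).1).symm
  · have hcomp : Tendsto (fun z : ℝ => (z - ξ₂) / σ) atTop atTop := by
      apply Tendsto.atTop_div_const hσ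
      have h := tendsto_atTop_add_const_right atTop (-ξ₂) tendsto_id
      refine h.congr fun z => ?_
      simp only [id_eq]
      ring
    have h0 : Tendsto (fun z : ℝ => ξ₂ - σ * ratioAux c ((z - ξ₂) / σ)) atTop (nhds ξ₂) := by
      have := (tendsto_const_nhds : Tendsto (fun _ : ℝ => ξ₂) atTop (nhds ξ₂)).sub (((ratio_tendsto c hc).comp hcomp).const_mul σ)
      simpa using this
    exact h0.congr fun z => ((key z).2).symm
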